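/- A subset B ⊆ {l,r}* has no infinite antichain if and only if there exists a natural number k such that every antichain contained in B has cardinality at most k. -/

import Mathlib

/-- An antichain for the prefix order on finite binary words. -/
def IsAnti (A : Set (List Bool)) : Prop :=
  ∀ x ∈ A, ∀ y ∈ A, x ≠ y → ¬ x <+: y ∧ ¬ y <+: x

/-- `B` contains an infinite antichain for the prefix order. -/
def HasInfAnti (B : Set (List Bool)) : Prop :=
  ∃ A : Set (List Bool), A ⊆ B ∧ A.Infinite ∧ IsAnti A

namespace NoInfAntiAux

/-- Antichains in `B` extending `w` are unbounded in size. -/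
def Unb (B : Set (List Bool)) (w : List Bool) : Prop :=
  ∀ n : ℕ, ∃ A : Finset (List Bool), ↑A ⊆ B ∧ (∀ x ∈ A, w <+: x) ∧
    IsAnti (↑A : Set (List Bool)) ∧ n ≤ A.card

lemma ext_step {w x : List Bool} (h : w <+: x) (hne : x ≠ w) :
    ∃ b : Bool, w ++ [b] <+: x := by
  obtain ⟨t, rfl⟩ := h
  cases t with
  | nil => simp at hne
  | cons b t' => exact ⟨b, ⟨t', by simp⟩⟩

lemma anti_subset {A A' : Set (List Bool)} (h : A' ⊆ A) (hA : IsAnti A) : IsAnti A' :=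
  fun x hx y hy hxy => hA x (h hx) y (h hy) hxy

lemma unb_split {B : Set (List Bool)} {w : List Bool} (h : Unb B w) :
    Unb B (w ++ [true]) ∨ Unb B (w ++ [false]) := by
  by_contra hc
  push_neg at hc
  obtain ⟨h1, h2⟩ := hc
  simp only [Unb, not_forall] at h1 h2
  obtain ⟨n1, hn1⟩ := h1
  obtain ⟨n2, hn2⟩ := h2
  push_neg at hn1 hn2
  have hpos1 : 0 < n1 := by
    have := hn1 ∅ (by simp) (by simp) (by intro x hx; simp at hx)
    simpa using this
  have hpos2 : 0 < n2 := by
    have := hn2 ∅ (by simp) (by simp) (by intro x hx; simp at hx)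
    simpa using this
  obtain ⟨A, hAB, hAw, hAanti, hAcard⟩ := h (n1 + n2 + 1)
  by_cases hw : w ∈ A
  · -- A = {w}
    have : A ⊆ {w} := by
      intro x hx
      simp only [Finset.mem_singleton]
      by_contra hxw
      exact (hAanti x hx w hw hxw).2 (hAw x hx)
    have := Finset.card_le_card this
    simp at this
    omega
  · set A1 := A.filter (fun x => (w ++ [true]) <+: x) with hA1def
    set A2 := A.filter (fun x => ¬ (w ++ [true]) <+: x) with hA2def
    have hsplit : A1.card + A2.card = A.card := Finset.card_filter_add_card_filter_not _
    have hc1 : A1.card < n1 := by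
      apply hn1 A1
      · exact fun x hx => hAB (Finset.mem_coe.mpr (Finset.mem_of_mem_filter x hx))
      · intro x hx
        exact (Finset.mem_filter.mp hx).2
      · exact anti_subset (by intro x hx; exact Finset.mem_of_mem_filter x hx) hAanti
    have hc2 : A2.card < n2 := by
      apply hn2 A2
      · exact fun x hx => hAB (Finset.mem_coe.mpr (Finset.mem_of_mem_filter x hx))
      · intro x hx
        have hxA := Finset.mem_of_mem_filter x hx
        have hnp := (Finset.mem_filter.mp hx).2
        have hne : x ≠ w := fun he => hw (he ▸ hxA)
        obtain ⟨b, hb⟩ := ext_step (hAw x hxA) hne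
        cases b
        · exact hb
        · exact absurd hb hnp
      · exact anti_subset (by intro x hx; exact Finset.mem_of_mem_filter x hx) hAanti
    omega

open Classical in
/-- The infinite path along which antichains remain unbounded. -/
noncomputable def path (B : Set (List Bool)) (h : Unb B []) : ℕ → {w : List Bool // Unb B w}
  | 0 => ⟨[], h⟩
  | n + 1 =>
    if hl : Unb B ((path B h n).1 ++ [true]) then ⟨(path B h n).1 ++ [true], hl⟩
    else ⟨(path B h n).1 ++ [false], (unb_split (path B h n).2).resolve_left hl⟩

lemma path_length (B : Set (List Bool)) (h : Unb B []) (n : ℕ) :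
    (path B h n).1.length = n := by
  induction n with
  | zero => rfl
  | succ n ih =>
    rw [path]
    split <;> simp [ih]

lemma path_prefix_succ (B : Set (List Bool)) (h : Unb B []) (n : ℕ) :
    (path B h n).1 <+: (path B h (n + 1)).1 := by
  rw [path]
  split <;> simp

lemma path_prefix (B : Set (List Bool)) (h : Unb B []) {m n : ℕ} (hmn : m ≤ n) :
    (path B h m).1 <+: (path B h n).1 := by
  induction n with
  | zero => simp_all
  | succ n ih =>
    rcases Nat.lt_or_ge m (n + 1) with hlt | hge
    · exact (ih (Nat.lt_succ_iff.mp hlt)).trans (path_prefix_succ B h n)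
    · have : m = n + 1 := le_antisymm hmn hge
      subst this
      exact List.prefix_refl _

/-- `x` lies on the path (is a prefix of some path element). -/
def OnPath (B : Set (List Bool)) (h : Unb B []) (x : List Bool) : Prop :=
  ∃ m, x <+: (path B h m).1

/-- From unboundedness at a path node, harvest an element of `B` extending that node
but not lying on the path. -/
lemma harvest (B : Set (List Bool)) (h : Unb B []) (n : ℕ) :
    ∃ x, x ∈ B ∧ (path B h n).1 <+: x ∧ ¬ OnPath B h x := by
  obtain ⟨A, hAB, hAw, hAanti, hAcard⟩ := (path B h n).2 2
  have h2 : 1 < A.card := by omega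
  obtain ⟨y, hy, z, hz, hyz⟩ := Finset.one_lt_card.mp h2
  have hinc := hAanti y hy z hz hyz
  by_cases hyp : OnPath B h y
  · refine ⟨z, hAB hz, hAw z hz, ?_⟩
    intro hzp
    obtain ⟨m1, hm1⟩ := hyp
    obtain ⟨m2, hm2⟩ := hzp
    rcases Nat.le_total m1 m2 with hm | hm
    · have hy2 : y <+: (path B h m2).1 := hm1.trans (path_prefix B h hm)
      rcases List.prefix_or_prefix_of_prefix hy2 hm2 with hp | hp
      · exact hinc.1 hp
      · exact hinc.2 hp
    · have hz2 : z <+: (path B h m1).1 := hm2.trans (path_prefix B h hm)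
      rcases List.prefix_or_prefix_of_prefix hm1 hz2 with hp | hp
      · exact hinc.1 hp
      · exact hinc.2 hp
  · exact ⟨y, hAB hy, hAw y hy, hyp⟩

noncomputable def harvested (B : Set (List Bool)) (h : Unb B []) (n : ℕ) :
    {x : List Bool // x ∈ B ∧ (path B h n).1 <+: x ∧ ¬ OnPath B h x} :=
  ⟨(harvest B h n).choose, (harvest B h n).choose_spec⟩

/-- The sequence of antichain elements. -/
noncomputable def seq (B : Set (List Bool)) (h : Unb B []) : ℕ → List Bool
  | 0 => (harvested B h 0).1
  | k + 1 => (harvested B h ((seq B h k).length + 1)).1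

lemma seq_spec (B : Set (List Bool)) (h : Unb B []) (k : ℕ) :
    seq B h k ∈ B ∧ ¬ OnPath B h (seq B h k) := by
  cases k with
  | zero => exact ⟨(harvested B h 0).2.1, (harvested B h 0).2.2.2⟩
  | succ k =>
    exact ⟨(harvested B h _).2.1, (harvested B h _).2.2.2⟩

lemma seq_ext (B : Set (List Bool)) (h : Unb B []) (k : ℕ) :
    (path B h ((seq B h k).length + 1)).1 <+: seq B h (k + 1) :=
  (harvested B h _).2.2.1

lemma seq_len_lt (B : Set (List Bool)) (h : Unb B []) (k : ℕ) :
    (seq B h k).length < (seq B h (k + 1)).length := by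
  have := (seq_ext B h k).length_le
  rw [path_length] at this
  omega

lemma seq_len_mono (B : Set (List Bool)) (h : Unb B []) :
    StrictMono (fun k => (seq B h k).length) :=
  strictMono_nat_of_lt_succ (seq_len_lt B h)

lemma seq_incomp (B : Set (List Bool)) (h : Unb B []) {j k : ℕ} (hjk : j < k) :
    ¬ seq B h j <+: seq B h k ∧ ¬ seq B h k <+: seq B h j := by
  obtain ⟨k, rfl⟩ := Nat.exists_eq_add_of_lt hjk
  set m := (seq B h (j + k)).length + 1 with hm
  have hlen : (seq B h j).length < m := by
    have := (seq_len_mono B h).monotone (Nat.le_add_right j k)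
    try simp only at this
    omega
  have hpm : (path B h m).1 <+: seq B h (j + k + 1) := seq_ext B h (j + k)
  have hnop : ¬ OnPath B h (seq B h j) := (seq_spec B h j).2
  constructor
  · intro hp
    apply hnop
    refine ⟨m, List.prefix_of_prefix_length_le (hp.trans ?_) hpm ?_⟩
    · exact List.prefix_refl _
    · rw [path_length]; omega
  · intro hp
    have := (hpm.trans hp).length_le
    rw [path_length] at this
    omega

lemma hasInfAnti_of_unb (B : Set (List Bool)) (h : Unb B []) : HasInfAnti B := by
  refine ⟨Set.range (seq B h), ?_, ?_, ?_⟩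
  · rintro x ⟨k, rfl⟩
    exact (seq_spec B h k).1
  · apply Set.infinite_range_of_injective
    intro a b hab
    by_contra hne
    rcases Nat.lt_or_ge a b with hlt | hge
    · exact (seq_incomp B h hlt).1 (hab ▸ List.prefix_refl _)
    · have hlt : b < a := lt_of_le_of_ne hge (Ne.symm hne)
      exact (seq_incomp B h hlt).1 (hab ▸ List.prefix_refl _)
  · rintro x ⟨a, rfl⟩ y ⟨b, rfl⟩ hxy
    rcases Nat.lt_or_ge a b with hlt | hge
    · exact seq_incomp B h hlt
    · have hlt : b < a := lt_of_le_of_ne hge (fun he => hxy (he ▸ rfl))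
      exact ⟨(seq_incomp B h hlt).2, (seq_incomp B h hlt).1⟩

end NoInfAntiAux

open NoInfAntiAux in
/-- `B` has no infinite antichain iff there is a bound `k` on the cardinality of
antichains contained in `B`. -/
theorem no_infAnti_iff_bounded (B : Set (List Bool)) :
    ¬ HasInfAnti B ↔
      ∃ k : ℕ, 1 ≤ k ∧ ∀ A : Set (List Bool), A ⊆ B → IsAnti A →
        A.Finite ∧ A.ncard ≤ k := by
  constructor
  · intro hno
    by_contra hb
    push_neg at hb
    apply hno
    apply hasInfAnti_of_unb
    intro n
    obtain ⟨A, hAB, hAanti, hA⟩ := hb (n + 1) (by omega)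
    have hfin : A.Finite := by
      by_contra hinf
      exact hno ⟨A, hAB, hinf, hAanti⟩
    have hcard : n + 1 < A.ncard := hA hfin
    refine ⟨hfin.toFinset, ?_, ?_, ?_, ?_⟩
    · intro x hx
      rw [Finset.mem_coe, Set.Finite.mem_toFinset] at hx
      exact hAB hx
    · intro x _
      exact List.nil_prefix
    · apply anti_subset _ hAanti
      intro x hx
      rwa [Finset.mem_coe, Set.Finite.mem_toFinset] at hx
    · rw [Set.ncard_eq_toFinset_card A hfin] at hcard
      omega
  · rintro ⟨k, _, hbound⟩ ⟨A, hAB, hAinf, hAanti⟩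
    obtain ⟨hfin, _⟩ := hbound A hAB hAanti
    exact hAinf hfin
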